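/- Let m, N ∈ ℕ, let a : Fin m → ℝ with a i ≥ 0 for all i, and let n : Fin m → ℝ^N satisfy ∑_{i} a i • n i = 0 and ⟨n i, n j⟩ ≤ 0 for all i ≠ j. Let d, e : Fin m → ℝ^N satisfy ‖e i − e j‖ ≤ ‖d i − d j‖ for all i, j. Then ‖ ∑_{i} a i • (e i ⊗ n i) ‖_F ≤ ‖ ∑_{i} a i • (d i ⊗ n i) ‖_F. -/

import Mathlib

open scoped RealInnerProductSpace

/-- The Frobenius norm of a real `N × N` matrix. -/
noncomputable def frobeniusNorm {N : ℕ} (A : Matrix (Fin N) (Fin N) ℝ) : ℝ :=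
  Real.sqrt (∑ k, ∑ l, (A k l) ^ 2)

private lemma sum_swap4 {α β γ δ : Type*} [Fintype α] [Fintype β] [Fintype γ] [Fintype δ]
    (f : α → β → γ → δ → ℝ) :
    ∑ k, ∑ l, ∑ i, ∑ j, f k l i j = ∑ i, ∑ j, ∑ k, ∑ l, f k l i j := by
  have h1 : ∀ k : α, ∑ l, ∑ i, ∑ j, f k l i j = ∑ i : γ, ∑ l, ∑ j, f k l i j :=
    fun k => Finset.sum_comm
  simp_rw [h1]
  rw [Finset.sum_comm]
  refine Finset.sum_congr rfl fun i _ => ?_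
  have h2 : ∀ k : α, ∑ l, ∑ j, f k l i j = ∑ j : δ, ∑ l, f k l i j :=
    fun k => Finset.sum_comm
  simp_rw [h2]
  exact Finset.sum_comm

private lemma frob_sq_eq (m N : ℕ) (a : Fin m → ℝ)
    (n x : Fin m → EuclideanSpace ℝ (Fin N)) :
    ∑ k, ∑ l, ((∑ i, a i • (Matrix.of fun p q => x i p * n i q)) k l) ^ 2
      = ∑ i, ∑ j, (a i * a j * ⟪n i, n j⟫) * ⟪x i, x j⟫ := by
  have entry : ∀ k l, ((∑ i, a i • (Matrix.of fun p q => x i p * n i q)) k l)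
      = ∑ i, a i * (x i k * n i l) := by
    intro k l
    simp [Matrix.sum_apply, Matrix.smul_apply, Matrix.of_apply, Pi.smul_apply, smul_eq_mul]
  simp_rw [entry, pow_two, Finset.sum_mul_sum]
  rw [sum_swap4 (fun k l i j => (a i * (x i k * n i l)) * (a j * (x j k * n j l)))]
  refine Finset.sum_congr rfl fun i _ => Finset.sum_congr rfl fun j _ => ?_
  simp only [PiLp.inner_apply, RCLike.inner_apply, conj_trivial]
  calc ∑ k, ∑ l, (a i * (x i k * n i l)) * (a j * (x j k * n j l))
      = ∑ k, (x i k * x j k) * ∑ l, (a i * a j) * (n i l * n j l) := by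
        refine Finset.sum_congr rfl fun k _ => ?_
        rw [Finset.mul_sum]
        exact Finset.sum_congr rfl fun l _ => by ring
    _ = (∑ k, x i k * x j k) * ∑ l, (a i * a j) * (n i l * n j l) := by
        rw [← Finset.sum_mul]
    _ = (a i * a j * ∑ l, n i l * n j l) * ∑ k, x i k * x j k := by
        rw [← Finset.mul_sum]; ring
  simp only [mul_comm ((n j).ofLp _) ((n i).ofLp _), mul_comm ((x j).ofLp _) ((x i).ofLp _)]

theorem frobenius_sum_smul_outer_le_of_dist_le
    (m N : ℕ) (a : Fin m → ℝ) (ha : ∀ i, 0 ≤ a i)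
    (n : Fin m → EuclideanSpace ℝ (Fin N))
    (hsum : ∑ i, a i • n i = 0)
    (hobtuse : ∀ i j, i ≠ j → ⟪n i, n j⟫ ≤ 0)
    (d e : Fin m → EuclideanSpace ℝ (Fin N))
    (hde : ∀ i j, ‖e i - e j‖ ≤ ‖d i - d j‖) :
    frobeniusNorm (∑ i, a i • (Matrix.of fun p q => e i p * n i q))
      ≤ frobeniusNorm (∑ i, a i • (Matrix.of fun p q => d i p * n i q)) := by
  have hinner0 : ∀ i, ∑ j, a j * ⟪n i, n j⟫ = 0 := by
    intro i
    have h : (⟪n i, ∑ j, a j • n j⟫ : ℝ) = 0 := by rw [hsum]; exact inner_zero_right _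
    rw [inner_sum] at h
    simp_rw [real_inner_smul_right] at h
    exact h
  -- the key reformulation of the quadratic form
  have hS : ∀ x : Fin m → EuclideanSpace ℝ (Fin N),
      ∑ i, ∑ j, (a i * a j * ⟪n i, n j⟫) * ⟪x i, x j⟫
        = ∑ i, ∑ j, (a i * a j * ⟪n i, n j⟫) * (-(‖x i - x j‖ ^ 2) / 2) := by
    intro x
    have expand : ∀ i j, (⟪x i, x j⟫ : ℝ)
        = ‖x i‖ ^ 2 / 2 + ‖x j‖ ^ 2 / 2 + -(‖x i - x j‖ ^ 2) / 2 := by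
      intro i j
      rw [norm_sub_sq_real (x i) (x j)]; ring
    have split : ∀ i j, (a i * a j * ⟪n i, n j⟫) * ⟪x i, x j⟫
        = (a i * ‖x i‖ ^ 2 / 2) * (a j * ⟪n i, n j⟫)
          + (a j * ‖x j‖ ^ 2 / 2) * (a i * ⟪n j, n i⟫)
          + (a i * a j * ⟪n i, n j⟫) * (-(‖x i - x j‖ ^ 2) / 2) := by
      intro i j
      rw [expand i j, real_inner_comm (n j) (n i)]; ring
    simp_rw [split, Finset.sum_add_distrib, ← Finset.mul_sum, hinner0, mul_zero,
      Finset.sum_const_zero, zero_add]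
    rw [Finset.sum_comm (f := fun i j => (a j * ‖x j‖ ^ 2 / 2) * (a i * ⟪n j, n i⟫))]
    simp_rw [← Finset.mul_sum, hinner0, mul_zero, Finset.sum_const_zero, zero_add]
  -- termwise comparison
  have hterm : ∑ i, ∑ j, (a i * a j * ⟪n i, n j⟫) * (-(‖e i - e j‖ ^ 2) / 2)
      ≤ ∑ i, ∑ j, (a i * a j * ⟪n i, n j⟫) * (-(‖d i - d j‖ ^ 2) / 2) := by
    refine Finset.sum_le_sum fun i _ => Finset.sum_le_sum fun j _ => ?_
    rcases eq_or_ne i j with rfl | hij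
    · simp
    · have hc : a i * a j * ⟪n i, n j⟫ ≤ 0 :=
        mul_nonpos_of_nonneg_of_nonpos (mul_nonneg (ha i) (ha j)) (hobtuse i j hij)
      have hsq : ‖e i - e j‖ ^ 2 ≤ ‖d i - d j‖ ^ 2 :=
        pow_le_pow_left₀ (norm_nonneg _) (hde i j) 2
      have : -(‖e i - e j‖ ^ 2) / 2 ≥ -(‖d i - d j‖ ^ 2) / 2 := by linarith
      exact mul_le_mul_of_nonpos_left this hc
  unfold frobeniusNorm
  apply Real.sqrt_le_sqrt
  rw [frob_sq_eq m N a n e, frob_sq_eq m N a n d, hS e, hS d]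
  exact hterm
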